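/- Let T > 0, let a, k : [0,T] → [0,∞) be Lebesgue integrable, and let A ≥ 0. Define ȳ(t) := A·exp(∫_t^T a(s) ds) + ∫_t^T k(s)·exp(∫_t^s a(r) dr) ds for t ∈ [0,T]. Then ȳ is continuous and nonnegative on [0,T], ȳ(T) = A, ȳ is nonincreasing (so ȳ(t) ≤ ȳ(0) = A·exp(∫_0^T a(s) ds) + ∫_0^T k(s)·exp(∫_0^s a(r) dr) ds for all t), and ȳ satisfies the backward integral equation ȳ(t) = A + ∫_t^T ( k(s) + a(s)·|ȳ(s)| ) ds for every t ∈ [0,T]. -/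

import Mathlib

open MeasureTheory

lemma swap_triangle {t T : ℝ} (f g : ℝ → ℝ)
    (hf : IntegrableOn f (Set.Icc t T)) (hg : IntegrableOn g (Set.Icc t T)) :
    ∫ s in Set.Icc t T, f s * ∫ u in Set.Icc s T, g u
      = ∫ u in Set.Icc t T, (∫ s in Set.Icc t u, f s) * g u := by
  set μ := volume.restrict (Set.Icc t T) with hμ
  set H : ℝ → ℝ → ℝ := fun s u => Set.indicator {p : ℝ × ℝ | p.1 ≤ p.2}
    (fun p => f p.1 * g p.2) (s, u) with hH
  have hmeas : MeasurableSet {p : ℝ × ℝ | p.1 ≤ p.2} :=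
    measurableSet_le measurable_fst measurable_snd
  have hprod : Integrable (fun p : ℝ × ℝ => f p.1 * g p.2) (μ.prod μ) :=
    hf.mul_prod hg
  have hint : Integrable (Function.uncurry H) (μ.prod μ) := by
    refine Integrable.mono' hprod.norm (hprod.aestronglyMeasurable.indicator hmeas) ?_
    filter_upwards with p
    simp only [Function.uncurry, hH]
    exact norm_indicator_le_norm_self _ _
  have key := integral_integral_swap hint
  have h1 : ∀ s ∈ Set.Icc t T, (∫ u, H s u ∂μ) = f s * ∫ u in Set.Icc s T, g u := by
    intro s hs
    have e : ∀ u, H s u = Set.indicator (Set.Ici s) (fun u => f s * g u) u := by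
      intro u; simp [hH, Set.indicator_apply, Set.mem_Ici]
    simp_rw [e]
    rw [hμ, integral_indicator measurableSet_Ici, Measure.restrict_restrict measurableSet_Ici]
    rw [show Set.Ici s ∩ Set.Icc t T = Set.Icc s T by
      ext x
      simp only [Set.mem_inter_iff, Set.mem_Ici, Set.mem_Icc]
      exact ⟨fun h => ⟨h.1, h.2.2⟩, fun h => ⟨h.1, hs.1.trans h.1, h.2⟩⟩]
    exact integral_const_mul _ _
  have h2 : ∀ u ∈ Set.Icc t T, (∫ s, H s u ∂μ) = (∫ s in Set.Icc t u, f s) * g u := by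
    intro u hu
    have e : ∀ s, H s u = Set.indicator (Set.Iic u) (fun s => f s * g u) s := by
      intro s; simp [hH, Set.indicator_apply, Set.mem_Iic]
    simp_rw [e]
    rw [hμ, integral_indicator measurableSet_Iic, Measure.restrict_restrict measurableSet_Iic]
    rw [show Set.Iic u ∩ Set.Icc t T = Set.Icc t u by
      ext x
      simp only [Set.mem_inter_iff, Set.mem_Iic, Set.mem_Icc]
      exact ⟨fun h => ⟨h.2.1, h.1⟩, fun h => ⟨h.2, h.1, h.2.trans hu.2⟩⟩]
    exact integral_mul_const _ _
  calc ∫ s in Set.Icc t T, f s * ∫ u in Set.Icc s T, g u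
      = ∫ s, (∫ u, H s u ∂μ) ∂μ := by
        refine (setIntegral_congr_fun measurableSet_Icc ?_).symm
        intro s hs; exact h1 s hs
    _ = ∫ u, (∫ s, H s u ∂μ) ∂μ := key
    _ = ∫ u in Set.Icc t T, (∫ s in Set.Icc t u, f s) * g u := by
        refine setIntegral_congr_fun measurableSet_Icc ?_
        intro u hu; exact h2 u hu

lemma Icc_split {h : ℝ → ℝ} {p q r : ℝ} (hpq : p ≤ q) (hqr : q ≤ r)
    (hint : IntegrableOn h (Set.Icc p r)) :
    ∫ s in Set.Icc p r, h s = (∫ s in Set.Icc p q, h s) + ∫ s in Set.Icc q r, h s := by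
  rw [integral_Icc_eq_integral_Ioc, integral_Icc_eq_integral_Ioc, integral_Icc_eq_integral_Ioc,
    ← Set.Ioc_union_Ioc_eq_Ioc hpq hqr]
  exact setIntegral_union (Set.Ioc_disjoint_Ioc_of_le le_rfl) measurableSet_Ioc
    ((hint.mono_set (Set.Ioc_subset_Icc_self.trans (Set.Icc_subset_Icc_right hqr))))
    ((hint.mono_set (Set.Ioc_subset_Icc_self.trans (Set.Icc_subset_Icc_left hpq))))

lemma exp_shift_sum (w : ℝ) : ∑' n : ℕ, w ^ (n + 1) / (Nat.factorial (n + 1) : ℝ) = Real.exp w - 1 := by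
  have hexp : Real.exp w = ∑' n : ℕ, w ^ n / (Nat.factorial n : ℝ) := by
    rw [Real.exp_eq_exp_ℝ, NormedSpace.exp_eq_tsum_div]
  have hsum : Summable fun n : ℕ => w ^ n / (Nat.factorial n : ℝ) :=
    Real.summable_pow_div_factorial w
  rw [hexp, hsum.tsum_eq_zero_add]
  simp

lemma summable_shift (w : ℝ) : Summable fun n : ℕ => w ^ (n + 1) / (Nat.factorial (n + 1) : ℝ) :=
  (summable_nat_add_iff 1).mpr (Real.summable_pow_div_factorial w)

lemma pow_int {T : ℝ} {a : ℝ → ℝ} (ha : IntegrableOn a (Set.Icc 0 T))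
    (ha0 : ∀ s ∈ Set.Icc (0:ℝ) T, 0 ≤ a s) (n : ℕ) :
    ∀ x ∈ Set.Icc (0:ℝ) T,
      ∫ s in Set.Icc 0 x, a s * (∫ r in Set.Icc 0 s, a r) ^ n
        = (∫ s in Set.Icc 0 x, a s) ^ (n + 1) / (n + 1) := by
  set F : ℝ → ℝ := fun x => ∫ r in Set.Icc 0 x, a r with hF
  have hFc : ContinuousOn F (Set.Icc 0 T) := intervalIntegral.continuousOn_primitive_Icc ha
  have hint : ∀ m : ℕ, ∀ x ∈ Set.Icc (0:ℝ) T,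
      IntegrableOn (fun s => a s * F s ^ m) (Set.Icc 0 x) := by
    intro m x hx
    exact (ha.mono_set (Set.Icc_subset_Icc_right hx.2)).mul_continuousOn
      (((hFc.mono (Set.Icc_subset_Icc_right hx.2)).pow m)) isCompact_Icc
  induction n with
  | zero =>
    intro x hx
    simp
  | succ n ih =>
    intro x hx
    have hax : IntegrableOn a (Set.Icc 0 x) := ha.mono_set (Set.Icc_subset_Icc_right hx.2)
    have hgx : IntegrableOn (fun u => a u * F u ^ n) (Set.Icc 0 x) := hint n x hx
    have hswap := swap_triangle (t := 0) (T := x) a (fun u => a u * F u ^ n) hax hgx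
    -- rewrite inner integral on LHS
    have hinner : ∀ s ∈ Set.Icc (0:ℝ) x,
        a s * (∫ u in Set.Icc s x, a u * F u ^ n)
          = a s * (F x ^ (n+1) / (n+1)) - a s * F s ^ (n+1) / (n+1) := by
      intro s hs
      have hsT : s ∈ Set.Icc (0:ℝ) T := ⟨hs.1, hs.2.trans hx.2⟩
      have hsplit := Icc_split hs.1 hs.2 (hint n x hx)
      have h1 := ih x hx
      have h2 := ih s hsT
      have : (∫ u in Set.Icc s x, a u * F u ^ n)
          = F x ^ (n+1) / (n+1) - F s ^ (n+1) / (n+1) := by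
        rw [← h1, ← h2]; linarith [hsplit]
      rw [this]; ring
    rw [setIntegral_congr_fun measurableSet_Icc hinner] at hswap
    have hIsub : (∫ s in Set.Icc 0 x,
        (a s * (F x ^ (n+1) / (n+1)) - a s * F s ^ (n+1) / (n+1)))
        = (∫ s in Set.Icc 0 x, a s) * (F x ^ (n+1) / (n+1))
          - (∫ s in Set.Icc 0 x, a s * F s ^ (n+1)) / (n+1) := by
      rw [integral_sub (hax.mul_const _) ((hint (n+1) x hx).div_const _)]
      rw [integral_mul_const, integral_div]
    rw [hIsub] at hswap
    have hrhs : (∫ u in Set.Icc 0 x, (∫ s in Set.Icc 0 u, a s) * (a u * F u ^ n))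
        = ∫ s in Set.Icc 0 x, a s * F s ^ (n+1) := by
      refine setIntegral_congr_fun measurableSet_Icc ?_
      intro u _
      simp only [hF]
      ring
    rw [hrhs] at hswap
    -- hswap : (∫ a) * (Fx^{n+1}/(n+1)) - I/(n+1) = I
    have hn1 : ((n:ℝ) + 1) ≠ 0 := by positivity
    have hn2 : ((n:ℝ) + 2) ≠ 0 := by positivity
    have hFx : F x = ∫ s in Set.Icc 0 x, a s := rfl
    have hgoal : (∫ s in Set.Icc 0 x, a s * (∫ r in Set.Icc 0 s, a r) ^ (n+1))
        = ∫ s in Set.Icc 0 x, a s * F s ^ (n+1) := rfl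
    rw [hgoal, ← hFx]
    push_cast
    field_simp at hswap
    rw [eq_div_iff (by positivity : ((n:ℝ) + 1 + 1) ≠ 0)]
    have hpow : F x ^ (n + 1 + 1) = F x * F x ^ (n + 1) := by ring
    linarith [hswap, hpow]

lemma exp_int {T : ℝ} {a : ℝ → ℝ} (ha : IntegrableOn a (Set.Icc 0 T))
    (ha0 : ∀ s ∈ Set.Icc (0:ℝ) T, 0 ≤ a s) (c : ℝ) {t x : ℝ}
    (ht : 0 ≤ t) (htx : t ≤ x) (hxT : x ≤ T) :
    c * ∫ s in Set.Icc t x, a s * Real.exp (c * ∫ r in Set.Icc 0 s, a r)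
      = Real.exp (c * ∫ r in Set.Icc 0 x, a r) - Real.exp (c * ∫ r in Set.Icc 0 t, a r) := by
  set F : ℝ → ℝ := fun x => ∫ r in Set.Icc 0 x, a r with hF
  have hxmem : x ∈ Set.Icc (0:ℝ) T := ⟨ht.trans htx, hxT⟩
  have htmem : t ∈ Set.Icc (0:ℝ) T := ⟨ht, htx.trans hxT⟩
  have hsub : Set.Icc t x ⊆ Set.Icc 0 T := Set.Icc_subset_Icc ht hxT
  have hFc : ContinuousOn F (Set.Icc 0 T) := intervalIntegral.continuousOn_primitive_Icc ha
  have hFnonneg : ∀ s ∈ Set.Icc (0:ℝ) T, 0 ≤ F s := by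
    intro s hs
    exact setIntegral_nonneg measurableSet_Icc fun r hr =>
      ha0 r ⟨hr.1, hr.2.trans hs.2⟩
  have hFmono : ∀ p q, 0 ≤ p → p ≤ q → q ≤ T → F p ≤ F q := by
    intro p q hp hpq hqT
    have := Icc_split hp hpq (ha.mono_set (Set.Icc_subset_Icc_right hqT))
    have hnn : 0 ≤ ∫ s in Set.Icc p q, a s :=
      setIntegral_nonneg measurableSet_Icc fun r hr =>
        ha0 r ⟨hp.trans hr.1, hr.2.trans hqT⟩
    simp only [hF]
    rw [this]; linarith
  -- main integral of a * F^n over Icc t x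
  have hmain : ∀ n : ℕ, ∫ s in Set.Icc t x, a s * F s ^ n
      = (F x ^ (n+1) - F t ^ (n+1)) / (n+1) := by
    intro n
    have h1 := pow_int ha ha0 n x hxmem
    have h2 := pow_int ha ha0 n t htmem
    have hint : IntegrableOn (fun s => a s * F s ^ n) (Set.Icc 0 x) :=
      (ha.mono_set (Set.Icc_subset_Icc_right hxT)).mul_continuousOn
        ((hFc.mono (Set.Icc_subset_Icc_right hxT)).pow n) isCompact_Icc
    have hsplit := Icc_split ht htx hint
    have e1 : (∫ s in Set.Icc 0 x, a s * (∫ r in Set.Icc 0 s, a r) ^ n)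
        = ∫ s in Set.Icc 0 x, a s * F s ^ n := rfl
    have e2 : (∫ s in Set.Icc 0 t, a s * (∫ r in Set.Icc 0 s, a r) ^ n)
        = ∫ s in Set.Icc 0 t, a s * F s ^ n := rfl
    rw [e1] at h1; rw [e2] at h2
    have hFx : F x = ∫ s in Set.Icc 0 x, a s := rfl
    have hFt : F t = ∫ s in Set.Icc 0 t, a s := rfl
    rw [← hFx] at h1; rw [← hFt] at h2
    rw [h1, h2] at hsplit
    field_simp at hsplit ⊢
    linarith
  -- integrability of each term
  have hintn : ∀ n : ℕ, Integrable (fun s => a s * ((c * F s) ^ n / (Nat.factorial n : ℝ)))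
      (volume.restrict (Set.Icc t x)) := by
    intro n
    refine (ha.mono_set hsub).mul_continuousOn ?_ isCompact_Icc
    exact ((((continuousOn_const.mul (hFc.mono hsub)).pow n)).div_const _)
  -- norm integrals
  have hnorm : ∀ n : ℕ, (∫ s in Set.Icc t x, ‖a s * ((c * F s) ^ n / (Nat.factorial n : ℝ))‖)
      = (|c| ^ n / (Nat.factorial n : ℝ)) * ((F x ^ (n+1) - F t ^ (n+1)) / (n+1)) := by
    intro n
    rw [← hmain n, ← integral_const_mul]
    refine setIntegral_congr_fun measurableSet_Icc ?_
    intro s hs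
    have hsT : s ∈ Set.Icc (0:ℝ) T := hsub hs
    have h1 : 0 ≤ a s := ha0 s hsT
    have h2 : 0 ≤ F s := hFnonneg s hsT
    simp only [Real.norm_eq_abs]
    rw [abs_mul, abs_of_nonneg h1, abs_div, abs_pow, abs_mul, abs_of_nonneg h2, Nat.abs_cast]
    ring
  -- summability of norms
  have hsummable : Summable (fun n : ℕ =>
      (|c| ^ n / (Nat.factorial n : ℝ)) * ((F x ^ (n+1) - F t ^ (n+1)) / (n+1))) := by
    have hFt0 : 0 ≤ F t := hFnonneg t htmem
    have hFtx : F t ≤ F x := hFmono t x ht htx hxT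
    have hFx0 : 0 ≤ F x := hFt0.trans hFtx
    refine Summable.of_nonneg_of_le (fun n => ?_) (fun n => ?_)
      ((Real.summable_pow_div_factorial (|c| * F x)).mul_left (F x))
    · have hle : F t ^ (n+1) ≤ F x ^ (n+1) := pow_le_pow_left₀ hFt0 hFtx _
      exact mul_nonneg (by positivity) (div_nonneg (by linarith) (by positivity))
    · have h1 : F x ^ (n+1) - F t ^ (n+1) ≤ F x ^ (n+1) := by
        nlinarith [pow_nonneg hFt0 (n+1)]
      have h2 : ((F x ^ (n+1) - F t ^ (n+1)) / ((n:ℝ)+1)) ≤ F x ^ (n+1) := by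
        rw [div_le_iff₀ (by positivity)]
        nlinarith [pow_le_pow_left₀ hFt0 hFtx (n+1), pow_nonneg hFx0 (n+1),
          (by exact_mod_cast Nat.le_add_left 0 n : (0:ℝ) ≤ (n:ℕ))]
      calc |c| ^ n / (Nat.factorial n : ℝ) * ((F x ^ (n+1) - F t ^ (n+1)) / (n+1))
          ≤ |c| ^ n / (Nat.factorial n : ℝ) * F x ^ (n+1) := by
            apply mul_le_mul_of_nonneg_left h2 (by positivity)
        _ = F x * ((|c| * F x) ^ n * F x ^ 0 / (Nat.factorial n : ℝ)) := by
            rw [mul_pow]; ring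
        _ = F x * ((|c| * F x) ^ n / (Nat.factorial n : ℝ)) := by ring
  have hexp : ∀ w : ℝ, Real.exp w = ∑' n : ℕ, w ^ n / (Nat.factorial n : ℝ) := by
    intro w; rw [Real.exp_eq_exp_ℝ, NormedSpace.exp_eq_tsum_div]
  have hptws : ∀ s, a s * Real.exp (c * F s)
      = ∑' n : ℕ, a s * ((c * F s) ^ n / (Nat.factorial n : ℝ)) := by
    intro s; rw [tsum_mul_left, ← hexp]
  have hsum' : Summable fun n : ℕ =>
      ∫ s in Set.Icc t x, ‖a s * ((c * F s) ^ n / (Nat.factorial n : ℝ))‖ := by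
    have e : (fun n : ℕ => ∫ s in Set.Icc t x, ‖a s * ((c * F s) ^ n / (Nat.factorial n : ℝ))‖)
        = fun n => (|c| ^ n / (Nat.factorial n : ℝ)) * ((F x ^ (n+1) - F t ^ (n+1)) / (n+1)) :=
      funext hnorm
    rw [e]; exact hsummable
  have hswap := integral_tsum_of_summable_integral_norm
      (μ := volume.restrict (Set.Icc t x))
      (F := fun (n : ℕ) s => a s * ((c * F s) ^ n / (Nat.factorial n : ℝ))) hintn hsum'
  have key : (∫ s in Set.Icc t x, a s * Real.exp (c * F s))
      = ∑' n : ℕ, ∫ s in Set.Icc t x, a s * ((c * F s) ^ n / (Nat.factorial n : ℝ)) := by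
    rw [hswap]
    exact integral_congr_ae (Filter.Eventually.of_forall fun s => hptws s)
  have hval : ∀ n : ℕ, (∫ s in Set.Icc t x, a s * ((c * F s) ^ n / (Nat.factorial n : ℝ)))
      = (c ^ n / (Nat.factorial n : ℝ)) * ((F x ^ (n+1) - F t ^ (n+1)) / (n+1)) := by
    intro n
    rw [← hmain n, ← integral_const_mul]
    refine setIntegral_congr_fun measurableSet_Icc ?_
    intro s _
    simp only [mul_pow]
    ring
  have hfact : ∀ n : ℕ, (Nat.factorial (n+1) : ℝ) = (n+1) * (Nat.factorial n : ℝ) := by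
    intro n; exact_mod_cast Nat.factorial_succ n
  have hterm : ∀ n : ℕ,
      c * ((c ^ n / (Nat.factorial n : ℝ)) * ((F x ^ (n+1) - F t ^ (n+1)) / (n+1)))
        = (c * F x) ^ (n+1) / (Nat.factorial (n+1) : ℝ)
          - (c * F t) ^ (n+1) / (Nat.factorial (n+1) : ℝ) := by
    intro n
    have h1 : (Nat.factorial n : ℝ) ≠ 0 := Nat.cast_ne_zero.mpr (Nat.factorial_ne_zero n)
    have h2 : ((n : ℝ) + 1) ≠ 0 := by positivity
    rw [hfact n, mul_pow, mul_pow]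
    field_simp
    ring
  have hvals : (fun n : ℕ =>
      ∫ s in Set.Icc t x, a s * ((c * F s) ^ n / (Nat.factorial n : ℝ)))
      = fun n => (c ^ n / (Nat.factorial n : ℝ)) * ((F x ^ (n+1) - F t ^ (n+1)) / (n+1)) :=
    funext hval
  rw [show (∫ s in Set.Icc t x, a s * Real.exp (c * ∫ r in Set.Icc 0 s, a r))
      = ∫ s in Set.Icc t x, a s * Real.exp (c * F s) from rfl, key, hvals, ← tsum_mul_left,
    tsum_congr hterm,
    (summable_shift (c * F x)).tsum_sub (summable_shift (c * F t)),
    exp_shift_sum, exp_shift_sum]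
  ring

lemma ii_eq {h : ℝ → ℝ} {p q : ℝ} (hpq : p ≤ q) :
    ∫ s in p..q, h s = ∫ s in Set.Icc p q, h s := by
  rw [intervalIntegral.integral_of_le hpq, integral_Icc_eq_integral_Ioc]

theorem comparison_ode_solution_properties
    (T : ℝ) (hT : 0 < T)
    (a k : ℝ → ℝ)
    (ha_int : IntegrableOn a (Set.Icc 0 T))
    (hk_int : IntegrableOn k (Set.Icc 0 T))
    (ha_nonneg : ∀ t ∈ Set.Icc (0 : ℝ) T, 0 ≤ a t)
    (hk_nonneg : ∀ t ∈ Set.Icc (0 : ℝ) T, 0 ≤ k t)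
    (A : ℝ) (hA : 0 ≤ A)
    (ybar : ℝ → ℝ)
    (hybar : ∀ t : ℝ, ybar t =
      A * Real.exp (∫ s in t..T, a s) +
        ∫ s in t..T, k s * Real.exp (∫ r in t..s, a r)) :
    ContinuousOn ybar (Set.Icc 0 T) ∧
    (∀ t ∈ Set.Icc (0 : ℝ) T, 0 ≤ ybar t) ∧
    ybar T = A ∧
    AntitoneOn ybar (Set.Icc 0 T) ∧
    (∀ t ∈ Set.Icc (0 : ℝ) T, ybar t ≤ ybar 0) ∧
    (∀ t ∈ Set.Icc (0 : ℝ) T,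
      ybar t = A + ∫ s in t..T, (k s + a s * |ybar s|)) := by
  have hTmem : T ∈ Set.Icc (0:ℝ) T := ⟨hT.le, le_rfl⟩
  have h0mem : (0:ℝ) ∈ Set.Icc (0:ℝ) T := ⟨le_rfl, hT.le⟩
  have hEc : ContinuousOn (fun s => Real.exp (∫ r in Set.Icc 0 s, a r)) (Set.Icc 0 T) :=
    Real.continuous_exp.comp_continuousOn (intervalIntegral.continuousOn_primitive_Icc ha_int)
  have hEpos : ∀ s : ℝ, 0 < Real.exp (∫ r in Set.Icc 0 s, a r) := fun s => Real.exp_pos _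
  have hkE_int : IntegrableOn (fun u => k u * Real.exp (∫ r in Set.Icc 0 u, a r))
      (Set.Icc 0 T) := hk_int.mul_continuousOn hEc isCompact_Icc
  have hFdiff : ∀ t ∈ Set.Icc (0:ℝ) T, ∀ s ∈ Set.Icc t T,
      ∫ r in Set.Icc t s, a r = (∫ r in Set.Icc 0 s, a r) - (∫ r in Set.Icc 0 t, a r) := by
    intro t ht s hs
    have := Icc_split ht.1 hs.1 (ha_int.mono_set (Set.Icc_subset_Icc_right hs.2))
    linarith
  have hybar' : ∀ t ∈ Set.Icc (0:ℝ) T, ybar t =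
      (A * Real.exp (∫ r in Set.Icc 0 T, a r)
        + ∫ u in Set.Icc t T, k u * Real.exp (∫ r in Set.Icc 0 u, a r))
        / Real.exp (∫ r in Set.Icc 0 t, a r) := by
    intro t ht
    rw [hybar t]
    have h1 : (∫ s in t..T, a s)
        = (∫ r in Set.Icc 0 T, a r) - (∫ r in Set.Icc 0 t, a r) := by
      rw [ii_eq ht.2]; exact hFdiff t ht T ⟨ht.2, le_rfl⟩
    have h3 : (∫ s in t..T, k s * Real.exp (∫ r in t..s, a r))
        = ∫ s in t..T, (k s * Real.exp (∫ r in Set.Icc 0 s, a r))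
            / Real.exp (∫ r in Set.Icc 0 t, a r) := by
      refine intervalIntegral.integral_congr ?_
      intro s hs
      rw [Set.uIcc_of_le ht.2] at hs
      show k s * Real.exp (∫ r in t..s, a r)
        = k s * Real.exp (∫ r in Set.Icc 0 s, a r) / Real.exp (∫ r in Set.Icc 0 t, a r)
      rw [ii_eq hs.1, hFdiff t ht s hs, Real.exp_sub]
      ring
    rw [h1, h3, intervalIntegral.integral_div, ii_eq ht.2, Real.exp_sub]
    have h2 := (hEpos t).ne'
    field_simp
  have hK_nonneg : ∀ t ∈ Set.Icc (0:ℝ) T,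
      0 ≤ ∫ u in Set.Icc t T, k u * Real.exp (∫ r in Set.Icc 0 u, a r) := by
    intro t ht
    refine setIntegral_nonneg measurableSet_Icc fun u hu => ?_
    exact mul_nonneg (hk_nonneg u ⟨ht.1.trans hu.1, hu.2⟩) (Real.exp_pos _).le
  have hnum_nonneg : ∀ t ∈ Set.Icc (0:ℝ) T,
      0 ≤ A * Real.exp (∫ r in Set.Icc 0 T, a r)
        + ∫ u in Set.Icc t T, k u * Real.exp (∫ r in Set.Icc 0 u, a r) :=
    fun t ht => add_nonneg (mul_nonneg hA (Real.exp_pos _).le) (hK_nonneg t ht)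
  have hy_nonneg : ∀ t ∈ Set.Icc (0:ℝ) T, 0 ≤ ybar t := by
    intro t ht
    rw [hybar' t ht]
    exact div_nonneg (hnum_nonneg t ht) (hEpos t).le
  have hyT : ybar T = A := by
    rw [hybar T]; simp
  have hEmono : ∀ p q : ℝ, p ∈ Set.Icc (0:ℝ) T → q ∈ Set.Icc (0:ℝ) T → p ≤ q →
      Real.exp (∫ r in Set.Icc 0 p, a r) ≤ Real.exp (∫ r in Set.Icc 0 q, a r) := by
    intro p q hp hq hpq
    rw [Real.exp_le_exp]
    have h := hFdiff p hp q ⟨hpq, hq.2⟩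
    have hnn : 0 ≤ ∫ r in Set.Icc p q, a r :=
      setIntegral_nonneg measurableSet_Icc fun r hr =>
        ha_nonneg r ⟨hp.1.trans hr.1, hr.2.trans hq.2⟩
    linarith
  have hK_anti : ∀ p q : ℝ, p ∈ Set.Icc (0:ℝ) T → q ∈ Set.Icc (0:ℝ) T → p ≤ q →
      (∫ u in Set.Icc q T, k u * Real.exp (∫ r in Set.Icc 0 u, a r))
        ≤ ∫ u in Set.Icc p T, k u * Real.exp (∫ r in Set.Icc 0 u, a r) := by
    intro p q hp hq hpq
    have hsplit := Icc_split hpq hq.2 (hkE_int.mono_set (Set.Icc_subset_Icc_left hp.1))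
    have hnn : 0 ≤ ∫ u in Set.Icc p q, k u * Real.exp (∫ r in Set.Icc 0 u, a r) :=
      setIntegral_nonneg measurableSet_Icc fun u hu =>
        mul_nonneg (hk_nonneg u ⟨hp.1.trans hu.1, hu.2.trans hq.2⟩) (Real.exp_pos _).le
    linarith
  have hanti : AntitoneOn ybar (Set.Icc 0 T) := by
    intro p hp q hq hpq
    rw [hybar' p hp, hybar' q hq]
    have h1 := hK_anti p q hp hq hpq
    have h2 := hEmono p q hp hq hpq
    exact div_le_div₀ (hnum_nonneg p hp) (by linarith) (hEpos p) h2
  have hKc : ContinuousOn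
      (fun t => ∫ u in Set.Icc t T, k u * Real.exp (∫ r in Set.Icc 0 u, a r))
      (Set.Icc 0 T) := by
    have hcont : ContinuousOn
        (fun t => (∫ u in Set.Icc 0 T, k u * Real.exp (∫ r in Set.Icc 0 u, a r))
          - ∫ u in Set.Icc 0 t, k u * Real.exp (∫ r in Set.Icc 0 u, a r)) (Set.Icc 0 T) :=
      continuousOn_const.sub (intervalIntegral.continuousOn_primitive_Icc hkE_int)
    refine hcont.congr ?_
    intro t ht
    have := Icc_split ht.1 ht.2 hkE_int
    simp only
    linarith
  have hyc : ContinuousOn ybar (Set.Icc 0 T) :=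
    ((continuousOn_const.add hKc).div hEc (fun t _ => (hEpos t).ne')).congr
      fun t ht => hybar' t ht
  have hbound : ∀ t ∈ Set.Icc (0:ℝ) T, ybar t ≤ ybar 0 := fun t ht =>
    hanti h0mem ht ht.1
  refine ⟨hyc, hy_nonneg, hyT, hanti, hbound, ?_⟩
  intro t ht
  have hsub' : Set.Icc t T ⊆ Set.Icc 0 T := Set.Icc_subset_Icc ht.1 le_rfl
  have hEinvc : ContinuousOn (fun s => (Real.exp (∫ r in Set.Icc 0 s, a r))⁻¹)
      (Set.Icc 0 T) := hEc.inv₀ fun s _ => (hEpos s).ne'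
  have ha' : IntegrableOn a (Set.Icc t T) := ha_int.mono_set hsub'
  have hk' : IntegrableOn k (Set.Icc t T) := hk_int.mono_set hsub'
  have haEinv : IntegrableOn (fun s => a s * (Real.exp (∫ r in Set.Icc 0 s, a r))⁻¹)
      (Set.Icc t T) := ha'.mul_continuousOn (hEinvc.mono hsub') isCompact_Icc
  have hkE' : IntegrableOn (fun u => k u * Real.exp (∫ r in Set.Icc 0 u, a r))
      (Set.Icc t T) := hkE_int.mono_set hsub'
  have haEK : IntegrableOn (fun s => a s * (Real.exp (∫ r in Set.Icc 0 s, a r))⁻¹ *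
      (∫ u in Set.Icc s T, k u * Real.exp (∫ r in Set.Icc 0 u, a r))) (Set.Icc t T) :=
    haEinv.mul_continuousOn (hKc.mono hsub') isCompact_Icc
  have st1 : (∫ s in t..T, (k s + a s * |ybar s|))
      = ∫ s in Set.Icc t T, (k s + a s * ybar s) := by
    rw [show (∫ s in t..T, (k s + a s * |ybar s|))
        = ∫ s in t..T, (k s + a s * ybar s) from intervalIntegral.integral_congr (by
      intro s hs
      rw [Set.uIcc_of_le ht.2] at hs
      simp only [abs_of_nonneg (hy_nonneg s (hsub' hs))]), ii_eq ht.2]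
  have st2 : (∫ s in Set.Icc t T, (k s + a s * ybar s))
      = ∫ s in Set.Icc t T, (k s
          + (A * Real.exp (∫ r in Set.Icc 0 T, a r)
              * (a s * (Real.exp (∫ r in Set.Icc 0 s, a r))⁻¹)
            + a s * (Real.exp (∫ r in Set.Icc 0 s, a r))⁻¹
              * (∫ u in Set.Icc s T, k u * Real.exp (∫ r in Set.Icc 0 u, a r)))) := by
    refine setIntegral_congr_fun measurableSet_Icc fun s hs => ?_
    rw [hybar' s (hsub' hs)]
    have h0 := (hEpos s).ne'
    field_simp
  have st3 : (∫ s in Set.Icc t T, (k s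
          + (A * Real.exp (∫ r in Set.Icc 0 T, a r)
              * (a s * (Real.exp (∫ r in Set.Icc 0 s, a r))⁻¹)
            + a s * (Real.exp (∫ r in Set.Icc 0 s, a r))⁻¹
              * (∫ u in Set.Icc s T, k u * Real.exp (∫ r in Set.Icc 0 u, a r)))))
      = (∫ s in Set.Icc t T, k s)
        + (A * Real.exp (∫ r in Set.Icc 0 T, a r)
            * ∫ s in Set.Icc t T, a s * (Real.exp (∫ r in Set.Icc 0 s, a r))⁻¹)
        + ∫ s in Set.Icc t T, a s * (Real.exp (∫ r in Set.Icc 0 s, a r))⁻¹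
            * (∫ u in Set.Icc s T, k u * Real.exp (∫ r in Set.Icc 0 u, a r)) := by
    have hc1 : IntegrableOn (fun s => A * Real.exp (∫ r in Set.Icc 0 T, a r)
        * (a s * (Real.exp (∫ r in Set.Icc 0 s, a r))⁻¹)) (Set.Icc t T) :=
      haEinv.const_mul _
    have h23 : IntegrableOn (fun s => A * Real.exp (∫ r in Set.Icc 0 T, a r)
        * (a s * (Real.exp (∫ r in Set.Icc 0 s, a r))⁻¹)
        + a s * (Real.exp (∫ r in Set.Icc 0 s, a r))⁻¹
          * (∫ u in Set.Icc s T, k u * Real.exp (∫ r in Set.Icc 0 u, a r)))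
        (Set.Icc t T) := hc1.add haEK
    rw [integral_add hk' h23, integral_add hc1 haEK, integral_const_mul]
    ring
  have hL2 : ∀ u ∈ Set.Icc t T,
      (∫ s in Set.Icc t u, a s * (Real.exp (∫ r in Set.Icc 0 s, a r))⁻¹)
        = (Real.exp (∫ r in Set.Icc 0 t, a r))⁻¹
          - (Real.exp (∫ r in Set.Icc 0 u, a r))⁻¹ := by
    intro u hu
    have h := exp_int ha_int ha_nonneg (-1) ht.1 hu.1 hu.2
    simp only [neg_one_mul, Real.exp_neg] at h
    linarith
  have hswap := swap_triangle (t := t) (T := T)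
    (fun s => a s * (Real.exp (∫ r in Set.Icc 0 s, a r))⁻¹)
    (fun u => k u * Real.exp (∫ r in Set.Icc 0 u, a r)) haEinv hkE'
  have hrhs : (∫ u in Set.Icc t T,
      (∫ s in Set.Icc t u, a s * (Real.exp (∫ r in Set.Icc 0 s, a r))⁻¹)
        * (k u * Real.exp (∫ r in Set.Icc 0 u, a r)))
      = ∫ u in Set.Icc t T, ((Real.exp (∫ r in Set.Icc 0 t, a r))⁻¹
          * (k u * Real.exp (∫ r in Set.Icc 0 u, a r)) - k u) := by
    refine setIntegral_congr_fun measurableSet_Icc fun u hu => ?_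
    rw [hL2 u hu]
    have h0 := (hEpos u).ne'
    field_simp
  have hI3 : (∫ s in Set.Icc t T, a s * (Real.exp (∫ r in Set.Icc 0 s, a r))⁻¹
      * (∫ u in Set.Icc s T, k u * Real.exp (∫ r in Set.Icc 0 u, a r)))
      = (Real.exp (∫ r in Set.Icc 0 t, a r))⁻¹
          * (∫ u in Set.Icc t T, k u * Real.exp (∫ r in Set.Icc 0 u, a r))
        - ∫ s in Set.Icc t T, k s := by
    rw [hswap, hrhs, integral_sub (hkE'.const_mul _) hk', integral_const_mul]
  have hL2T := hL2 T ⟨ht.2, le_rfl⟩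
  rw [st1, st2, st3, hL2T, hI3, hybar' t ht]
  have h1 := (hEpos t).ne'
  have h2 := (hEpos T).ne'
  field_simp
  ring
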